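/- Theorem A (precompactness), boundary part: Let (M_i, g_i, x⁰_i) be a sequence of pointed connected Riemannian n-manifolds with non-empty boundary of (c, k+1)-bounded geometry, and assume in addition that the sequence of distances d^{g_i}(x⁰_i, ∂M_i) is bounded. Then any pointed Riemannian manifold (M_∞, g_∞, x⁰_∞) arising as a C^k Cheeger–Gromov limit of a subsequence of (M_i, g_i, x⁰_i) has non-empty boundary. -/

import Mathlib

open scoped Manifold
open Filter Metric Set

noncomputable section

/-! ### A framework for pointed Riemannian manifolds with (possibly empty) boundary

Mathlib does not yet have Riemannian metrics, curvature tensors, injectivity radii,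
normal exponential maps or second fundamental forms.  We therefore bundle a pointed
Riemannian `n`-manifold (possibly with boundary, modelled on the Euclidean half space)
together with these derived geometric quantities, recorded as data of the bundle with
their intended meaning explained in the docstrings. -/

/-- The model Euclidean space. -/
abbrev Euc (n : ℕ) := EuclideanSpace ℝ (Fin n)

/-- The space in which (0,2)-tensors on the tangent spaces take values, using the
canonical identification `TangentSpace (𝓡∂ n) x = Euc n`. -/
abbrev TensorSp (n : ℕ) := Euc n →L[ℝ] Euc n →L[ℝ] ℝ

/-- A pointed connected Riemannian `n`-manifold with (possibly empty) boundary,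
bundled with its geodesic distance (as a `MetricSpace` structure), together with the
geometric quantities relevant for bounded geometry. -/
structure PRM (n : ℕ) [NeZero n] : Type 1 where
  /-- the underlying set of the manifold -/
  M : Type
  /-- the geodesic distance `d^g` of the Riemannian metric -/
  [ms : MetricSpace M]
  [cs : ChartedSpace (EuclideanHalfSpace n) M]
  smooth : IsManifold (𝓡∂ n) (⊤ : ℕ∞) M
  connected : ConnectedSpace M
  /-- the Riemannian metric `g`, viewed through `TangentSpace (𝓡∂ n) x = Euc n` -/
  g : M → TensorSp n
  g_smooth : ContMDiff (𝓡∂ n) 𝓘(ℝ, TensorSp n) (⊤ : ℕ∞) g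
  g_symm : ∀ x v w, g x v w = g x w v
  g_posdef : ∀ x v, v ≠ 0 → 0 < g x v v
  /-- the base point `x⁰` -/
  pt : M
  /-- `curvNorm l x` is the pointwise norm `|∇^l Rm_g|_g (x)` -/
  curvNorm : ℕ → M → ℝ
  /-- `sffNorm l x` is the pointwise norm `|∇_{∂g}^l II|_g (x)` of the covariant
  derivatives of the second fundamental form of the boundary -/
  sffNorm : ℕ → M → ℝ
  /-- `injOn S` is the injectivity radius `inj_g` of `g` on the subset `S` -/
  injOn : Set M → ℝ
  /-- the injectivity radius `inj_{∂g}(∂M)` of the boundary with its induced metric -/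
  injBoundary : ℝ
  /-- `normalExpDiffeo r` states that the normal exponential map
  `E : ∂M × [0,r] → M`, `E(y,s) = exp_y(s ν)` (for the inward unit normal `ν`),
  is a diffeomorphism onto its image -/
  normalExpDiffeo : ℝ → Prop
  /-- `covNorm l f x` is the pointwise norm `|∇^l f|(x)` of the `l`-th covariant
  derivative of a function `f` (so `covNorm 0 f = |f|` and `covNorm 1 f = |∇_g f|_g`) -/
  covNorm : ℕ → (M → ℝ) → M → ℝ

attribute [instance] PRM.ms PRM.cs

namespace PRM

variable {n : ℕ} [NeZero n]

/-- The boundary `∂M` of the manifold. -/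
def bd (X : PRM n) : Set X.M := (𝓡∂ n).boundary X.M

/-- A manifold without boundary. -/
def Boundaryless (X : PRM n) : Prop := X.bd = ∅

/-- `(c,k)`-bounded geometry of a Riemannian manifold with (possibly empty) boundary:
(i) the normal exponential map on `∂M × [0, c⁻¹]` is a diffeomorphism onto its image;
(ii) `inj_{∂g}(∂M) ≥ c⁻¹`; (iii) `inj_g(M ∖ B(∂M,r)) ≥ r` for all `0 < r ≤ c⁻¹`;
(iv) `|∇^l Rm_g| ≤ c` for `l ≤ k`; (v) `|∇^l II| ≤ c` for `l ≤ k`.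
When `∂M = ∅`, (i), (ii), (v) are empty and (iii) says `inj_g ≥ c⁻¹`. -/
def BoundedGeometry (c : ℝ) (k : ℕ) (X : PRM n) : Prop :=
  (X.bd.Nonempty → X.normalExpDiffeo c⁻¹ ∧ c⁻¹ ≤ X.injBoundary) ∧
  (∀ r : ℝ, 0 < r → r ≤ c⁻¹ → r ≤ X.injOn {x | ∀ y ∈ X.bd, r ≤ dist x y}) ∧
  (∀ l ≤ k, ∀ x, X.curvNorm l x ≤ c) ∧
  (∀ l ≤ k, ∀ x ∈ X.bd, X.sffNorm l x ≤ c)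

/-- `(c,k)`-bounded geometry of a *pointed* manifold: in addition, the base point
is at distance at least `2c⁻¹` from the boundary. -/
def PointedBoundedGeometry (c : ℝ) (k : ℕ) (X : PRM n) : Prop :=
  X.BoundedGeometry c k ∧ ∀ y ∈ X.bd, 2 * c⁻¹ ≤ dist X.pt y

/-- The `C^k` distance of two tensor fields (or functions) `s t : M → F` on a subset
`U`: the supremum over `x ∈ U` and `j ≤ k` of the norm at (the image of) `x` of the
`j`-th derivative of `s - t`, computed in the preferred chart at `x`. -/
def ckDistOn (X : PRM n) {F : Type} [NormedAddCommGroup F] [NormedSpace ℝ F]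
    (k : ℕ) (U : Set X.M) (s t : X.M → F) : ℝ :=
  ⨆ x : U, ⨆ j : Fin (k + 1),
    ‖iteratedFDerivWithin ℝ (j : ℕ)
      ((fun y => s y - t y) ∘ (extChartAt (𝓡∂ n) (x : X.M)).symm)
      (extChartAt (𝓡∂ n) (x : X.M)).target
      (extChartAt (𝓡∂ n) (x : X.M) (x : X.M))‖

/-- The pullback `φ^* g_Y` of the Riemannian metric of `Y` under `φ : X → Y`. -/
def pullbackMetric (X Y : PRM n) (φ : X.M → Y.M) : X.M → TensorSp n :=
  fun x => (Y.g (φ x)).bilinearComp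
    (mfderiv (𝓡∂ n) (𝓡∂ n) φ x) (mfderiv (𝓡∂ n) (𝓡∂ n) φ x)

/-- `φ` restricted to `U` is a diffeomorphism onto its image. -/
def IsDiffeoOntoImage (X Y : PRM n) (U : Set X.M) (φ : X.M → Y.M) : Prop :=
  Set.InjOn φ U ∧ ContMDiffOn (𝓡∂ n) (𝓡∂ n) (⊤ : ℕ∞) φ U ∧
    ∃ ψ : Y.M → X.M, ContMDiffOn (𝓡∂ n) (𝓡∂ n) (⊤ : ℕ∞) ψ (φ '' U) ∧ Set.EqOn (ψ ∘ φ) id U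

/-- Cheeger–Gromov `C^k`-convergence of a sequence of pointed Riemannian manifolds:
for every `m ≥ 1` and all sufficiently large `i` there are an open set
`U ⊇ B(x⁰_∞, m)` and diffeomorphisms onto their images `φ i : U → M_i` with
`φ i x⁰_∞ = x⁰_i`, `B(x⁰_i, m) ⊆ φ i '' U`, and `(φ i)^* g_i → g_∞` in `C^k` on `U`. -/
def CGConverges (k : ℕ) (X : ℕ → PRM n) (L : PRM n) : Prop :=
  ∀ m : ℕ, 1 ≤ m → ∃ (U : Set L.M) (φ : ∀ i, L.M → (X i).M) (N : ℕ),
    IsOpen U ∧ ball L.pt (m : ℝ) ⊆ U ∧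
    (∀ i, N ≤ i → IsDiffeoOntoImage L (X i) U (φ i) ∧ φ i L.pt = (X i).pt ∧
      ball (X i).pt (m : ℝ) ⊆ φ i '' U) ∧
    Tendsto (fun i => ckDistOn L k U (pullbackMetric L (X i) (φ i)) L.g) atTop (nhds 0)

/-- A `(c,k)`-height function on a pointed Riemannian manifold `(X,g,x⁰)`:
a smooth function `f : X → (−∞, 1]` such that (i) `|∇_g f| ≥ c⁻¹` on
`f⁻¹([−1/2, 1/2])` and `f⁻¹(0) ≠ ∅`; (ii) `f(x⁰) > 0` and
`d^g(x⁰, f⁻¹(0)) ∈ (c⁻¹, c)`; (iii) `|∇^l f| ≤ c` for all `l ≤ k`. -/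
structure IsHeightFunction (c : ℝ) (k : ℕ) (X : PRM n) (f : X.M → ℝ) : Prop where
  smooth : ContMDiff (𝓡∂ n) 𝓘(ℝ) (⊤ : ℕ∞) f
  le_one : ∀ x, f x ≤ 1
  grad_lower : ∀ x, f x ∈ Set.Icc (-(1/2) : ℝ) (1/2) → c⁻¹ ≤ X.covNorm 1 f x
  zero_nonempty : (f ⁻¹' {0}).Nonempty
  pos_at_pt : 0 < f X.pt
  dist_pt_zero : Metric.infDist X.pt (f ⁻¹' {0}) ∈ Set.Ioo c⁻¹ c
  deriv_bounds : ∀ l ≤ k, ∀ x, X.covNorm l f x ≤ c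

/-- Cheeger–Gromov `C^k`-convergence of manifolds together with `C^k`-convergence,
via the same comparison diffeomorphisms, of the pulled-back functions `φ_i^* f_i`
to `f_∞` on every ball `B(x⁰_∞, m)`. -/
def CGConvergesWith (k : ℕ) (X : ℕ → PRM n) (f : ∀ i, (X i).M → ℝ)
    (L : PRM n) (flim : L.M → ℝ) : Prop :=
  ∀ m : ℕ, 1 ≤ m → ∃ (U : Set L.M) (φ : ∀ i, L.M → (X i).M) (N : ℕ),
    IsOpen U ∧ ball L.pt (m : ℝ) ⊆ U ∧
    (∀ i, N ≤ i → IsDiffeoOntoImage L (X i) U (φ i) ∧ φ i L.pt = (X i).pt ∧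
      ball (X i).pt (m : ℝ) ⊆ φ i '' U) ∧
    Tendsto (fun i => ckDistOn L k U (pullbackMetric L (X i) (φ i)) L.g)
      atTop (nhds 0) ∧
    Tendsto (fun i => ckDistOn L k U (fun x => f i (φ i x)) flim) atTop (nhds 0)

/-- Cheeger–Gromov `C^k`-convergence of the cut manifolds `S_i ⊆ X_i` (e.g.
`S_i = f_i⁻¹([0,1])`, manifolds with boundary sitting inside the ambient manifolds)
to a cut manifold `S_∞ ⊆ X_∞`: for every `m ≥ 1` and all large `i` there are an
ambient open set `V` with `B(x⁰_∞, m) ∩ S_∞ ⊆ V` and diffeomorphisms onto their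
images `φ i : V → X_i` fixing the base points, mapping `V ∩ S_∞` into `S_i`,
whose images catch `B(x⁰_i, m) ∩ S_i`, with `(φ i)^* g_i → g_∞` in `C^k` on `V ∩ S_∞`. -/
def CGConvergesCut (k : ℕ) (X : ℕ → PRM n) (S : ∀ i, Set (X i).M)
    (L : PRM n) (Slim : Set L.M) : Prop :=
  ∀ m : ℕ, 1 ≤ m → ∃ (V : Set L.M) (φ : ∀ i, L.M → (X i).M) (N : ℕ),
    IsOpen V ∧ ball L.pt (m : ℝ) ∩ Slim ⊆ V ∧
    (∀ i, N ≤ i → IsDiffeoOntoImage L (X i) V (φ i) ∧ φ i L.pt = (X i).pt ∧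
      φ i '' (V ∩ Slim) ⊆ S i ∧
      ball (X i).pt (m : ℝ) ∩ S i ⊆ φ i '' (V ∩ Slim)) ∧
    Tendsto (fun i => ckDistOn L k (V ∩ Slim)
      (pullbackMetric L (X i) (φ i)) L.g) atTop (nhds 0)

end PRM

open PRM

/-- A smooth map admitting a smooth local inverse maps interior points to interior
points (a consequence of the inverse function theorem). -/
lemma isInteriorPoint_image_of_diffeo
    {E H : Type*} [NormedAddCommGroup E] [NormedSpace ℝ E] [FiniteDimensional ℝ E]
    [TopologicalSpace H] {I : ModelWithCorners ℝ E H}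
    {M M' : Type*} [TopologicalSpace M] [ChartedSpace H M]
    [TopologicalSpace M'] [ChartedSpace H M']
    {U : Set M} (hU : IsOpen U) {φ : M → M'} (hφ : ContMDiffOn I I (⊤ : ℕ∞) φ U)
    {ψ : M' → M} (hψ : ContMDiffOn I I (⊤ : ℕ∞) ψ (φ '' U))
    (heq : Set.EqOn (ψ ∘ φ) id U) {x : M} (hx : x ∈ U)
    (hxi : I.IsInteriorPoint x) : I.IsInteriorPoint (φ x) := by
  have hφx : ContMDiffAt I I (⊤ : ℕ∞) φ x := hφ.contMDiffAt (hU.mem_nhds hx)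
  have hmd : MDifferentiableAt I I φ x := hφx.mdifferentiableAt (by simp)
  have hUx : UniqueMDiffWithinAt I U x := hU.uniqueMDiffWithinAt hx
  set A := mfderiv I I φ x with hA
  set B := mfderivWithin I I ψ (φ '' U) (φ x) with hB
  -- chain rule: B ∘ A = id
  have hψd : MDifferentiableWithinAt I I ψ (φ '' U) (φ x) :=
    (hψ (φ x) (mem_image_of_mem φ hx)).mdifferentiableWithinAt (by simp)
  have hcomp : mfderivWithin I I (ψ ∘ φ) U x = B.comp (mfderivWithin I I φ U x) :=
    mfderivWithin_comp x hψd hmd.mdifferentiableWithinAt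
      (fun y hy => mem_image_of_mem φ hy) hUx
  have hfull : mfderivWithin I I φ U x = A := mfderivWithin_of_isOpen hU hx
  have hid : mfderivWithin I I (ψ ∘ φ) U x =
      ContinuousLinearMap.id ℝ (TangentSpace I x) := by
    rw [mfderivWithin_congr heq (heq hx), mfderivWithin_id hUx]
  have hBA : B.comp A = ContinuousLinearMap.id ℝ (TangentSpace I x) := by
    rw [← hfull, ← hcomp, hid]
  -- hence A is a linear isomorphism
  have hinjA : Function.Injective A := by
    intro v w hvw
    have h1 : B (A v) = B (A w) := by rw [hvw]
    have h2 : ∀ u, B (A u) = u := fun u =>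
      congrFun (congrArg (fun (T : _ →L[ℝ] _) => ⇑T) hBA) u
    rw [h2 v, h2 w] at h1
    exact h1
  set A' : E →L[ℝ] E := A with hA'
  have hbij : Function.Bijective (A'.toLinearMap) :=
    ⟨hinjA, LinearMap.injective_iff_surjective.mp hinjA⟩
  set Aeq : E ≃L[ℝ] E :=
    (LinearEquiv.ofBijective A'.toLinearMap hbij).toContinuousLinearEquiv with hAeq
  have hAeqc : (Aeq : E →L[ℝ] E) = A' := by ext v; rfl
  -- pass to charts and apply the inverse function theorem
  set e := extChartAt I x with he
  set e' := extChartAt I (φ x) with he'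
  set p := e x with hp
  set F : E → E := e' ∘ φ ∘ e.symm with hF
  have hrange : range I ∈ nhds p := range_mem_nhds_isInteriorPoint hxi
  have hFc := ((contMDiffAt_iff.mp hφx).2).contDiffAt hrange
  have hfd : A' = fderiv ℝ F p := by
    have h1 : mfderiv I I φ x =
        fderivWithin ℝ (writtenInExtChartAt I I x φ) (range I) (extChartAt I x x) :=
      hmd.mfderiv
    have h2 : fderivWithin ℝ (writtenInExtChartAt I I x φ) (range I) (extChartAt I x x)
        = fderiv ℝ (writtenInExtChartAt I I x φ) (extChartAt I x x) :=
      fderivWithin_of_mem_nhds hrange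
    exact h1.trans h2
  have hstrict : HasStrictFDerivAt F (Aeq : E →L[ℝ] E) p := by
    rw [hAeqc, hfd]
    exact hFc.hasStrictFDerivAt (by simp)
  have hmap : Filter.map F (nhds p) = nhds (F p) := hstrict.map_nhds_eq_of_equiv
  -- a neighborhood of `p` mapped by `F` into `range I`
  have hx0 : e.symm p = x := extChartAt_to_inv x
  have hcs : ContinuousAt (φ ∘ e.symm) p := by
    have h1 : ContinuousAt e.symm p := continuousAt_extChartAt_symm x
    have h2 : ContinuousAt φ (e.symm p) := by rw [hx0]; exact hφx.continuousAt
    exact h2.comp h1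
  have hmem : (φ ∘ e.symm) p ∈ e'.source := by
    show φ (e.symm p) ∈ e'.source
    rw [hx0]
    exact mem_extChartAt_source (φ x)
  have hWs : (φ ∘ e.symm) ⁻¹' e'.source ∈ nhds p :=
    hcs.preimage_mem_nhds ((isOpen_extChartAt_source (φ x)).mem_nhds hmem)
  have hsub : ((φ ∘ e.symm) ⁻¹' e'.source) ⊆ F ⁻¹' (range I) := by
    intro z hz
    exact extChartAt_target_subset_range (φ x) (e'.map_source hz)
  have hrange' : range I ∈ nhds (F p) := by
    rw [← hmap]
    exact Filter.mem_map.mpr (Filter.mem_of_superset hWs hsub)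
  have hFp : F p = e' (φ x) := by
    show e' (φ (e.symm p)) = e' (φ x)
    rw [hx0]
  show extChartAt I (φ x) (φ x) ∈ interior (range I)
  rw [mem_interior_iff_mem_nhds, ← hFp]
  exact hrange'

/-- **Theorem A (precompactness), boundary part.**
Let `(M_i, g_i, x⁰_i)` be a sequence of pointed connected Riemannian `n`-manifolds
with non-empty boundary of `(c, k+1)`-bounded geometry, and assume that the sequence
of distances `d^{g_i}(x⁰_i, ∂M_i)` is bounded.  Then any pointed Riemannian manifold
arising as a `C^k` Cheeger–Gromov limit of a subsequence has non-empty boundary. -/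
theorem theoremA_boundary {n : ℕ} [NeZero n] (c : ℝ) (hc : 0 < c) (k : ℕ) (hk : 0 < k)
    (X : ℕ → PRM n)
    (hbd : ∀ i, (X i).bd.Nonempty)
    (hbg : ∀ i, PointedBoundedGeometry c (k + 1) (X i))
    (hdist : ∃ D : ℝ, ∀ i, Metric.infDist (X i).pt (X i).bd ≤ D)
    (σ : ℕ → ℕ) (hσ : StrictMono σ) (L : PRM n)
    (hconv : CGConverges k (fun i => X (σ i)) L) :
    L.bd.Nonempty := by
  haveI := L.smooth
  by_contra hemp
  rw [Set.not_nonempty_iff_eq_empty] at hemp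
  obtain ⟨D, hD⟩ := hdist
  obtain ⟨m₀, hm₀⟩ := exists_nat_gt D
  set m : ℕ := max m₀ 1 with hm
  have hm1 : 1 ≤ m := le_max_right _ _
  have hmD : D < (m : ℝ) := lt_of_lt_of_le hm₀ (by exact_mod_cast le_max_left m₀ 1)
  obtain ⟨U, φ, N, hUopen, hball, hdiff, _⟩ := hconv m hm1
  set j := σ N with hj
  haveI := (X j).smooth
  obtain ⟨hdf, hpt, himg⟩ := hdiff N le_rfl
  obtain ⟨hinj, hφ, ψ, hψ, heq⟩ := hdf
  have h1 : Metric.infDist (X j).pt (X j).bd < (m : ℝ) := lt_of_le_of_lt (hD j) hmD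
  obtain ⟨y, hy, hyd⟩ := (Metric.infDist_lt_iff (hbd j)).mp h1
  have hyball : y ∈ ball (X j).pt (m : ℝ) := by rwa [mem_ball, dist_comm]
  obtain ⟨x, hxU, hxy⟩ := himg hyball
  have hxint : (𝓡∂ n).IsInteriorPoint x := by
    have h0 : (𝓡∂ n).boundary L.M = ∅ := hemp
    have hxb : x ∈ ((𝓡∂ n).boundary L.M)ᶜ := by rw [h0]; simp
    rw [ModelWithCorners.compl_boundary] at hxb
    exact hxb
  have hyint : (𝓡∂ n).IsInteriorPoint y := by
    rw [← hxy]
    exact isInteriorPoint_image_of_diffeo hUopen hφ hψ heq hxU hxint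
  have hyb : y ∈ ((𝓡∂ n).interior ((X j).M))ᶜ := by
    rw [ModelWithCorners.compl_interior]
    exact hy
  exact hyb hyint
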